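/- Let s ∈ Λ_{m,λ}(d,v), i.e. s ∈ Λ_λ(d,v) and s is χ_m-semistable, and let i ∈ I. Then: (1) if λ_i ≠ 0, then b_i(s) is surjective and a_i(s) is injective; (2) if m_i > 0, then b_i(s) is surjective; (3) if m_i < 0, then a_i(s) is injective. -/

import Mathlib

open scoped BigOperators

noncomputable section

structure QuiverShape (I Hh : Type) : Type where
  src : Hh → I
  tgt : Hh → I
  noloop : ∀ h, src h ≠ tgt h
  rev : Hh → Hh
  rev_ne : ∀ h, rev h ≠ h
  rev_rev : ∀ h, rev (rev h) = h
  src_rev : ∀ h, src (rev h) = tgt h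
  tgt_rev : ∀ h, tgt (rev h) = src h
  eps : Hh → ℂ
  eps_pm : ∀ h, eps h = 1 ∨ eps h = -1
  eps_rev : ∀ h, eps (rev h) = - eps h

namespace QuiverShape

variable {I Hh : Type}

/-- The representation space `S(d,v)`: a triple `(B, γ, δ)`. -/
abbrev Rep (Q : QuiverShape I Hh) (d v : I → ℕ) : Type :=
  ((h : Hh) → Matrix (Fin (v (Q.tgt h))) (Fin (v (Q.src h))) ℂ)
  × ((i : I) → Matrix (Fin (v i)) (Fin (d i)) ℂ)
  × ((i : I) → Matrix (Fin (d i)) (Fin (v i)) ℂ)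

/-- The group `G_v = ∏ᵢ GL(Vᵢ)`. -/
abbrev GV (v : I → ℕ) : Type := (i : I) → (Matrix (Fin (v i)) (Fin (v i)) ℂ)ˣ

/-- The action of `G_v` on `S(d,v)`. -/
def act (Q : QuiverShape I Hh) {d v : I → ℕ} (g : GV v) (s : Q.Rep d v) : Q.Rep d v :=
  ⟨fun h => ((g (Q.tgt h) : Matrix (Fin (v (Q.tgt h))) (Fin (v (Q.tgt h))) ℂ) * s.1 h) * (((g (Q.src h))⁻¹ : (Matrix (Fin (v (Q.src h))) (Fin (v (Q.src h))) ℂ)ˣ) : Matrix (Fin (v (Q.src h))) (Fin (v (Q.src h))) ℂ),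
   fun i => (g i : Matrix _ _ ℂ) * s.2.1 i,
   fun i => s.2.2 i * (((g i)⁻¹ : (Matrix _ _ ℂ)ˣ) : Matrix _ _ ℂ)⟩

/-- `B_{h̄}`, pulled back to a matrix `V_{h₁} → V_{h₀}` via the identities
`(h̄)₀ = h₁`, `(h̄)₁ = h₀`. -/
def Bbar (Q : QuiverShape I Hh) {d v : I → ℕ} (s : Q.Rep d v) (h : Hh) :
    Matrix (Fin (v (Q.src h))) (Fin (v (Q.tgt h))) ℂ :=
  Matrix.reindex (finCongr (congrArg v (Q.tgt_rev h))) (finCongr (congrArg v (Q.src_rev h)))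
    (s.1 (Q.rev h))

/-- The `i`-th component of the moment map:
`μᵢ(s) = ∑_{h : h₁ = i} ε(h) B_h B_{h̄} + γᵢ δᵢ`. -/
def mu (Q : QuiverShape I Hh) [Fintype Hh] [DecidableEq I] {d v : I → ℕ}
    (s : Q.Rep d v) (i : I) : Matrix (Fin (v i)) (Fin (v i)) ℂ :=
  (∑ h : {h : Hh // Q.tgt h = i},
      Q.eps h.1 • (Matrix.reindex (finCongr (congrArg v h.2)) (finCongr (congrArg v h.2))
        (s.1 h.1 * Q.Bbar s h.1)))
  + s.2.1 i * s.2.2 i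

/-- `Λ_λ(d,v) = μ⁻¹(λ)`. -/
def lamSet (Q : QuiverShape I Hh) [Fintype Hh] [DecidableEq I] (lam : I → ℂ) (d v : I → ℕ) :
    Set (Q.Rep d v) :=
  {s | ∀ i, Q.mu s i = lam i • (1 : Matrix (Fin (v i)) (Fin (v i)) ℂ)}

/-- Index type for the coordinates (matrix entries) of `S(d,v)`. -/
abbrev Coord (Q : QuiverShape I Hh) (d v : I → ℕ) : Type :=
  ((h : Hh) × (Fin (v (Q.tgt h)) × Fin (v (Q.src h))))
  ⊕ (((i : I) × (Fin (v i) × Fin (d i)))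
  ⊕ ((i : I) × (Fin (d i) × Fin (v i))))

/-- The coordinates of a point of `S(d,v)`. -/
def coords (Q : QuiverShape I Hh) {d v : I → ℕ} (s : Q.Rep d v) : Q.Coord d v → ℂ
  | Sum.inl ⟨h, rc⟩ => s.1 h rc.1 rc.2
  | Sum.inr (Sum.inl ⟨i, rc⟩) => s.2.1 i rc.1 rc.2
  | Sum.inr (Sum.inr ⟨i, rc⟩) => s.2.2 i rc.1 rc.2

/-- A function `S(d,v) → ℂ` is polynomial if it is given by a polynomial in the
matrix entries. -/
def IsPolyFun (Q : QuiverShape I Hh) {d v : I → ℕ} (f : Q.Rep d v → ℂ) : Prop :=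
  ∃ P : MvPolynomial (Q.Coord d v) ℂ, ∀ s, f s = MvPolynomial.eval (Q.coords s) P

/-- The character `χ_m(g) = ∏ᵢ det(gᵢ)^{mᵢ}`. -/
def chi [Fintype I] {v : I → ℕ} (m : I → ℤ) (g : GV v) : ℂ :=
  ∏ i, ((g i : Matrix (Fin (v i)) (Fin (v i)) ℂ).det) ^ (m i)

/-- `χ_m`-semistability. -/
def Semistable (Q : QuiverShape I Hh) [Fintype I] {d v : I → ℕ} (m : I → ℤ)
    (s : Q.Rep d v) : Prop :=
  ∃ n : ℕ, 0 < n ∧ ∃ f : Q.Rep d v → ℂ, Q.IsPolyFun f ∧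
      (∀ (g : GV v) (t : Q.Rep d v), f (Q.act g t) = (chi m g) ^ n * f t) ∧ f s ≠ 0

/-- `a_{ij}` = number of arrows from `i` to `j`. -/
def aCount (Q : QuiverShape I Hh) (i j : I) : ℕ :=
  Nat.card {h : Hh // Q.src h = i ∧ Q.tgt h = j}

/-- The generalized Cartan matrix `c_{ij} = 2δ_{ij} - a_{ij}`. -/
def cartan (Q : QuiverShape I Hh) [DecidableEq I] (i j : I) : ℤ :=
  2 * (if i = j then 1 else 0) - (Q.aCount i j : ℤ)

/-- `T_i = D_i ⊕ ⊕_{h : h₁ = i} V_{h₀}`. -/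
abbrev TSpace (Q : QuiverShape I Hh) (d v : I → ℕ) (i : I) : Type :=
  (Fin (d i) → ℂ) × ((h : {h : Hh // Q.tgt h = i}) → (Fin (v (Q.src h.1)) → ℂ))

/-- Transport between coordinate spaces of equal dimensions. -/
def vcast {m n : ℕ} (hmn : m = n) : (Fin m → ℂ) ≃ₗ[ℂ] (Fin n → ℂ) :=
  LinearEquiv.funCongrLeft ℂ ℂ (finCongr hmn.symm)

/-- `a_i(s) = (δ_i, (B_{h̄})_{h : h₁ = i}) : V_i → T_i`. -/
def aMap (Q : QuiverShape I Hh) [DecidableEq I] {d v : I → ℕ}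
    (s : Q.Rep d v) (i : I) : (Fin (v i) → ℂ) →ₗ[ℂ] Q.TSpace d v i :=
  LinearMap.prod (Matrix.mulVecLin (s.2.2 i))
    (LinearMap.pi fun h =>
      Matrix.mulVecLin (Q.Bbar s h.1) ∘ₗ (vcast (congrArg v h.2)).symm.toLinearMap)

/-- `b_i(s) = (γ_i, (ε(h) B_h)_{h : h₁ = i}) : T_i → V_i`. -/
def bMap (Q : QuiverShape I Hh) [Fintype Hh] [DecidableEq I] {d v : I → ℕ}
    (s : Q.Rep d v) (i : I) : Q.TSpace d v i →ₗ[ℂ] (Fin (v i) → ℂ) :=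
  (Matrix.mulVecLin (s.2.1 i)).comp (LinearMap.fst ℂ _ _) +
    ∑ h : {h : Hh // Q.tgt h = i},
      Q.eps h.1 •
        ((vcast (congrArg v h.2)).toLinearMap ∘ₗ Matrix.mulVecLin (s.1 h.1) ∘ₗ
          (LinearMap.proj h) ∘ₗ (LinearMap.snd ℂ _ _))

/-- The canonical identification `T_i(d,v') = T_i(d,v)` when `v'` agrees with `v`
away from `i` (and the graph has no loops). -/
def Tcast (Q : QuiverShape I Hh) {d v v' : I → ℕ} (i : I)
    (hv' : ∀ j, j ≠ i → v' j = v j) : Q.TSpace d v' i ≃ₗ[ℂ] Q.TSpace d v i :=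
  (LinearEquiv.refl ℂ (Fin (d i) → ℂ)).prodCongr
    (LinearEquiv.piCongrRight fun h =>
      vcast (hv' (Q.src h.1) (fun he => Q.noloop h.1 (he.trans h.2.symm))))

/-- Exactness of `0 → M₁ → M₂ → M₃ → 0`. -/
def ShortExact {M₁ M₂ M₃ : Type} [AddCommGroup M₁] [Module ℂ M₁] [AddCommGroup M₂]
    [Module ℂ M₂] [AddCommGroup M₃] [Module ℂ M₃]
    (f : M₁ →ₗ[ℂ] M₂) (g : M₂ →ₗ[ℂ] M₃) : Prop :=
  Function.Injective f ∧ Function.Surjective g ∧ LinearMap.range f = LinearMap.ker g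

/-- Conditions (1)–(5) defining `Z_i^λ(d,v)`. -/
def ZConds (Q : QuiverShape I Hh) [Fintype Hh] [DecidableEq I] {d v v' : I → ℕ} (i : I)
    (hv' : ∀ j, j ≠ i → v' j = v j) (lam : I → ℂ)
    (s : Q.Rep d v) (s' : Q.Rep d v') : Prop :=
  (∀ h (hs : Q.src h ≠ i) (ht : Q.tgt h ≠ i),
      s.1 h = Matrix.reindex (finCongr (hv' _ ht)) (finCongr (hv' _ hs)) (s'.1 h)) ∧
  (∀ j (hj : j ≠ i),
      s.2.1 j = Matrix.reindex (finCongr (hv' j hj)) (Equiv.refl _) (s'.2.1 j)) ∧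
  (∀ j (hj : j ≠ i),
      s.2.2 j = Matrix.reindex (Equiv.refl _) (finCongr (hv' j hj)) (s'.2.2 j)) ∧
  ShortExact ((Q.Tcast i hv').toLinearMap ∘ₗ Q.aMap s' i) (Q.bMap s i) ∧
  ((Q.Tcast i hv').toLinearMap ∘ₗ (Q.aMap s' i ∘ₗ Q.bMap s' i) ∘ₗ (Q.Tcast i hv').symm.toLinearMap
      = Q.aMap s i ∘ₗ Q.bMap s i - lam i • LinearMap.id)

/-- The variety `Z_i^λ(d,v)`: conditions (1)–(5) together with condition (6). -/
def ZRel (Q : QuiverShape I Hh) [Fintype Hh] [DecidableEq I] {d v v' : I → ℕ} (i : I)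
    (hv' : ∀ j, j ≠ i → v' j = v j) (lam lam' : I → ℂ)
    (s : Q.Rep d v) (s' : Q.Rep d v') : Prop :=
  Q.ZConds i hv' lam s s' ∧ s ∈ Q.lamSet lam d v ∧ s' ∈ Q.lamSet lam' d v'

end QuiverShape

end


noncomputable section Aux

open Matrix

namespace QuiverShape

/-! ### Matrix helper lemmas -/

private lemma vmv_mul {k l n : Type} [Fintype l] (a : k → ℂ) (b : l → ℂ) (M : Matrix l n ℂ) :
    Matrix.vecMulVec a b * M = Matrix.vecMulVec a (b ᵥ* M) := by
  ext p q
  simp [Matrix.mul_apply, Matrix.vecMulVec_apply, Matrix.vecMul, dotProduct,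
    Finset.mul_sum, mul_assoc]

private lemma mul_vmv {k l n : Type} [Fintype l] (M : Matrix n l ℂ) (a : l → ℂ) (b : k → ℂ) :
    M * Matrix.vecMulVec a b = Matrix.vecMulVec (M *ᵥ a) b := by
  ext p q
  simp only [Matrix.mul_apply, Matrix.vecMulVec_apply, Matrix.mulVec, dotProduct,
    Finset.sum_mul]
  exact Finset.sum_congr rfl fun r _ => by ring

private lemma vmv_zero_right {k l : Type} (a : k → ℂ) :
    Matrix.vecMulVec a (0 : l → ℂ) = 0 := by
  ext p q; simp [Matrix.vecMulVec_apply]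

private lemma vmv_zero_left {k l : Type} (b : l → ℂ) :
    Matrix.vecMulVec (0 : k → ℂ) b = 0 := by
  ext p q; simp [Matrix.vecMulVec_apply]

private lemma vmv_vmv {k : Type} [Fintype k] (a b c e : k → ℂ) :
    Matrix.vecMulVec a b * Matrix.vecMulVec c e = (b ⬝ᵥ c) • Matrix.vecMulVec a e := by
  ext p q
  simp only [Matrix.mul_apply, Matrix.vecMulVec_apply, Matrix.smul_apply, dotProduct,
    smul_eq_mul, Finset.sum_mul, Finset.mul_sum]
  exact Finset.sum_congr rfl fun r _ => by ring

private lemma smul_vmv {k l : Type} (c : ℂ) (a : k → ℂ) (b : l → ℂ) :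
    c • Matrix.vecMulVec a b = Matrix.vecMulVec (c • a) b := by
  ext p q; simp [Matrix.vecMulVec_apply, mul_assoc]

private lemma one_add_smul_mul {N : Type} [Fintype N] [DecidableEq N]
    (P : Matrix N N ℂ) (hP : P * P = P) {a b : ℂ} (hab : a + b + a * b = 0) :
    (1 + a • P) * (1 + b • P) = 1 := by
  have h1 : (1 + a • P) * (1 + b • P) = 1 + (a + b + a * b) • P := by
    simp only [mul_add, add_mul, mul_one, one_mul, smul_mul_smul_comm, hP, add_smul]
    abel
  rw [h1, hab, zero_smul, add_zero]

private lemma det_one_add_smul_vmv {N : Type} [Fintype N] [DecidableEq N]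
    (a b : N → ℂ) (c : ℂ) :
    (1 + c • Matrix.vecMulVec a b).det = 1 + c * (b ⬝ᵥ a) := by
  rw [smul_vmv, Matrix.vecMulVec_eq Unit, Matrix.det_one_add_replicateCol_mul_replicateRow]
  rw [dotProduct_smul, smul_eq_mul]

variable {I Hh : Type}

/-! ### The key polynomial argument -/

theorem key_poly [Fintype I] [DecidableEq I] (Q : QuiverShape I Hh)
    {d v : I → ℕ} (m : I → ℤ) (s : Q.Rep d v) (hss : Q.Semistable m s)
    (A : ℂ → Q.Rep d v) (base slope : Q.Coord d v → ℂ)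
    (hA : ∀ u k, Q.coords (A u) k = base k + u * slope k)
    (c : ℤ) (hc : c < 0)
    (hrel : ∀ u : ℂ, u ≠ 0 → ∃ g : GV v, Q.act g s = A u ∧ chi m g = u ^ c) : False := by
  obtain ⟨n, hn, f, ⟨P, hP⟩, hequiv, hfs⟩ := hss
  set g1 : Q.Coord d v → Polynomial ℂ :=
    fun k => Polynomial.C (base k) + Polynomial.C (slope k) * Polynomial.X with hg1
  have comp : ∀ (p : MvPolynomial (Q.Coord d v) ℂ) (u : ℂ),
      (MvPolynomial.aeval g1 p).eval u = MvPolynomial.eval (fun k => (g1 k).eval u) p := by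
    intro p u
    induction p using MvPolynomial.induction_on with
    | C a => simp
    | add p r hp hr => simp [hp, hr]
    | mul_X p k hp => simp [hp]
  set q : Polynomial ℂ := MvPolynomial.aeval g1 P with hqdef
  have hq : ∀ u : ℂ, q.eval u = f (A u) := by
    intro u
    have he : (fun k => (g1 k).eval u) = Q.coords (A u) := by
      funext k; simp [hg1, hA]; ring
    rw [hqdef, comp, he, hP]
  set N : ℕ := (-c).toNat with hN
  have hNc : (N : ℤ) = -c := Int.toNat_of_nonneg (by omega)
  have hNn : 0 < N * n := Nat.mul_pos (by omega) hn
  set r : Polynomial ℂ := Polynomial.X ^ (N * n) * q - Polynomial.C (f s) with hr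
  have hroots : ∀ u : ℂ, u ≠ 0 → r.eval u = 0 := by
    intro u hu
    obtain ⟨g, hg, hchi⟩ := hrel u hu
    have hfA : f (A u) = (u ^ c) ^ n * f s := by
      rw [← hg, hequiv, hchi]
    have hpow : (u : ℂ) ^ (N * n) * (u ^ c) ^ n = 1 := by
      rw [pow_mul, ← mul_pow, ← zpow_natCast u N, ← zpow_add₀ hu, hNc, neg_add_cancel,
        zpow_zero, one_pow]
    rw [hr]
    simp only [Polynomial.eval_sub, Polynomial.eval_mul, Polynomial.eval_pow,
      Polynomial.eval_X, Polynomial.eval_C, hq, hfA]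
    rw [← mul_assoc, hpow, one_mul, sub_self]
  have hr0 : r = 0 := by
    apply Polynomial.eq_zero_of_infinite_isRoot
    apply Set.Infinite.mono (s := {x : ℂ | x ≠ 0})
    · exact fun x hx => hroots x hx
    · exact (Set.finite_singleton (0 : ℂ)).infinite_compl
  have := congrArg (Polynomial.eval 0) hr0
  rw [hr] at this
  simp only [Polynomial.eval_sub, Polynomial.eval_mul, Polynomial.eval_pow, Polynomial.eval_X,
    Polynomial.eval_C, Polynomial.eval_zero] at this
  rw [zero_pow (by omega), zero_mul, zero_sub, neg_eq_zero] at this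
  exact hfs this

theorem chi_units [Fintype I] [DecidableEq I] {v : I → ℕ} (m : I → ℤ) (i : I)
    (P : (j : I) → Matrix (Fin (v j)) (Fin (v j)) ℂ)
    (hdet : ∀ j (c : ℂ), (1 + c • P j).det = if j = i then 1 + c else 1)
    (t : ℂ) (g : GV v) (hg : ∀ j, (g j : Matrix (Fin (v j)) (Fin (v j)) ℂ) = 1 + (t - 1) • P j) :
    chi m g = t ^ (m i) := by
  unfold chi
  rw [Finset.prod_eq_single i]
  · rw [hg, hdet, if_pos rfl]
    norm_num
  · intro j _ hj
    rw [hg, hdet, if_neg hj, _root_.one_zpow]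
  · intro hi; exact absurd (Finset.mem_univ i) hi

theorem key_case_right [Fintype I] [DecidableEq I] (Q : QuiverShape I Hh)
    {d v : I → ℕ} (m : I → ℤ) (s : Q.Rep d v) (hss : Q.Semistable m s) (i : I)
    (hmi : 0 < m i)
    (P : (j : I) → Matrix (Fin (v j)) (Fin (v j)) ℂ)
    (hPP : ∀ j, P j * P j = P j)
    (hdet : ∀ j (c : ℂ), (1 + c • P j).det = if j = i then 1 + c else 1)
    (hB : ∀ h, P (Q.tgt h) * s.1 h = 0)
    (hg0 : ∀ j, P j * s.2.1 j = 0) : False := by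
  refine Q.key_poly m s hss
    (fun u => ⟨fun h => s.1 h + (u - 1) • (s.1 h * P (Q.src h)), s.2.1,
        fun j => s.2.2 j + (u - 1) • (s.2.2 j * P j)⟩)
    (Q.coords ⟨fun h => s.1 h - s.1 h * P (Q.src h), s.2.1,
        fun j => s.2.2 j - s.2.2 j * P j⟩)
    (Q.coords ⟨fun h => s.1 h * P (Q.src h), 0, fun j => s.2.2 j * P j⟩)
    ?_ (-(m i)) (by omega) ?_
  · rintro u (⟨h, r, c⟩ | ⟨j, r, c⟩ | ⟨j, r, c⟩) <;>
      simp only [coords, Matrix.add_apply, Matrix.sub_apply, Matrix.smul_apply,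
        Matrix.zero_apply, Pi.zero_apply, smul_eq_mul] <;> ring
  · intro u hu
    have hab : (u⁻¹ - 1) + (u - 1) + (u⁻¹ - 1) * (u - 1) = 0 := by
      field_simp
      ring
    have hab' : (u - 1) + (u⁻¹ - 1) + (u - 1) * (u⁻¹ - 1) = 0 := by
      rw [← hab]; ring
    refine ⟨fun j => ⟨1 + (u⁻¹ - 1) • P j, 1 + (u - 1) • P j,
      one_add_smul_mul (P j) (hPP j) hab, one_add_smul_mul (P j) (hPP j) hab'⟩, ?_, ?_⟩
    · refine Prod.ext (funext fun h => ?_) (Prod.ext (funext fun j => ?_) (funext fun j => ?_))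
      · show (1 + (u⁻¹ - 1) • P (Q.tgt h)) * s.1 h * (1 + (u - 1) • P (Q.src h))
            = s.1 h + (u - 1) • (s.1 h * P (Q.src h))
        rw [Matrix.add_mul, Matrix.one_mul, Matrix.smul_mul, hB, smul_zero, add_zero, Matrix.mul_add,
          Matrix.mul_one, Matrix.mul_smul]
      · show (1 + (u⁻¹ - 1) • P j) * s.2.1 j = s.2.1 j
        exact (by rw [Matrix.add_mul, Matrix.one_mul, Matrix.smul_mul, hg0, smul_zero, add_zero] : (1 + (u⁻¹ - 1) • P j) * s.2.1 j = s.2.1 j)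
      · show s.2.2 j * (1 + (u - 1) • P j) = s.2.2 j + (u - 1) • (s.2.2 j * P j)
        exact (by rw [Matrix.mul_add, Matrix.mul_one, Matrix.mul_smul] : s.2.2 j * (1 + (u - 1) • P j) = s.2.2 j + (u - 1) • (s.2.2 j * P j))
    · have := chi_units m i P hdet u⁻¹
        (fun j => ⟨1 + (u⁻¹ - 1) • P j, 1 + (u - 1) • P j,
          one_add_smul_mul (P j) (hPP j) hab, one_add_smul_mul (P j) (hPP j) hab'⟩)
        (fun j => rfl)
      rw [this, _root_.inv_zpow, ← _root_.zpow_neg]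

theorem key_case_left [Fintype I] [DecidableEq I] (Q : QuiverShape I Hh)
    {d v : I → ℕ} (m : I → ℤ) (s : Q.Rep d v) (hss : Q.Semistable m s) (i : I)
    (hmi : m i < 0)
    (P : (j : I) → Matrix (Fin (v j)) (Fin (v j)) ℂ)
    (hPP : ∀ j, P j * P j = P j)
    (hdet : ∀ j (c : ℂ), (1 + c • P j).det = if j = i then 1 + c else 1)
    (hB : ∀ h, s.1 h * P (Q.src h) = 0)
    (hd0 : ∀ j, s.2.2 j * P j = 0) : False := by
  refine Q.key_poly m s hss
    (fun u => ⟨fun h => s.1 h + (u - 1) • (P (Q.tgt h) * s.1 h),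
        fun j => s.2.1 j + (u - 1) • (P j * s.2.1 j), s.2.2⟩)
    (Q.coords ⟨fun h => s.1 h - P (Q.tgt h) * s.1 h,
        fun j => s.2.1 j - P j * s.2.1 j, s.2.2⟩)
    (Q.coords ⟨fun h => P (Q.tgt h) * s.1 h, fun j => P j * s.2.1 j, 0⟩)
    ?_ (m i) hmi ?_
  · rintro u (⟨h, r, c⟩ | ⟨j, r, c⟩ | ⟨j, r, c⟩) <;>
      simp only [coords, Matrix.add_apply, Matrix.sub_apply, Matrix.smul_apply,
        Matrix.zero_apply, Pi.zero_apply, smul_eq_mul] <;> ring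
  · intro u hu
    have hab : (u - 1) + (u⁻¹ - 1) + (u - 1) * (u⁻¹ - 1) = 0 := by
      field_simp
      ring
    have hab' : (u⁻¹ - 1) + (u - 1) + (u⁻¹ - 1) * (u - 1) = 0 := by
      rw [← hab]; ring
    refine ⟨fun j => ⟨1 + (u - 1) • P j, 1 + (u⁻¹ - 1) • P j,
      one_add_smul_mul (P j) (hPP j) hab, one_add_smul_mul (P j) (hPP j) hab'⟩, ?_, ?_⟩
    · refine Prod.ext (funext fun h => ?_) (Prod.ext (funext fun j => ?_) (funext fun j => ?_))
      · show (1 + (u - 1) • P (Q.tgt h)) * s.1 h * (1 + (u⁻¹ - 1) • P (Q.src h))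
            = s.1 h + (u - 1) • (P (Q.tgt h) * s.1 h)
        have hR : P (Q.tgt h) * s.1 h * P (Q.src h) = 0 := by
          rw [Matrix.mul_assoc, hB, Matrix.mul_zero]
        calc (1 + (u - 1) • P (Q.tgt h)) * s.1 h * (1 + (u⁻¹ - 1) • P (Q.src h))
            = s.1 h + (u - 1) • (P (Q.tgt h) * s.1 h)
              + ((u⁻¹ - 1) • (s.1 h * P (Q.src h))
              + ((u⁻¹ - 1) * (u - 1)) • (P (Q.tgt h) * s.1 h * P (Q.src h))) := by
              simp only [Matrix.add_mul, Matrix.mul_add, Matrix.one_mul, Matrix.mul_one,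
                Matrix.smul_mul, Matrix.mul_smul, smul_smul, smul_add]
          _ = s.1 h + (u - 1) • (P (Q.tgt h) * s.1 h) := by
              rw [hB, hR, smul_zero, smul_zero, add_zero, add_zero]
      · show (1 + (u - 1) • P j) * s.2.1 j = s.2.1 j + (u - 1) • (P j * s.2.1 j)
        exact (by rw [Matrix.add_mul, Matrix.one_mul, Matrix.smul_mul] : (1 + (u - 1) • P j) * s.2.1 j = s.2.1 j + (u - 1) • (P j * s.2.1 j))
      · show s.2.2 j * (1 + (u⁻¹ - 1) • P j) = s.2.2 j
        exact (by rw [Matrix.mul_add, Matrix.mul_one, Matrix.mul_smul, hd0, smul_zero, add_zero] : s.2.2 j * (1 + (u⁻¹ - 1) • P j) = s.2.2 j)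
    · exact chi_units m i P hdet u
        (fun j => ⟨1 + (u - 1) • P j, 1 + (u⁻¹ - 1) • P j,
          one_add_smul_mul (P j) (hPP j) hab, one_add_smul_mul (P j) (hPP j) hab'⟩)
        (fun j => rfl)
theorem exists_P_right [Fintype I] [DecidableEq I] [Fintype Hh] [DecidableEq Hh]
    (Q : QuiverShape I Hh) {d v : I → ℕ} (s : Q.Rep d v) (i : I)
    (hns : ¬ Function.Surjective ⇑(Q.bMap s i)) :
    ∃ P : (j : I) → Matrix (Fin (v j)) (Fin (v j)) ℂ,
      (∀ j, P j * P j = P j) ∧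
      (∀ j (c : ℂ), (1 + c • P j).det = if j = i then 1 + c else 1) ∧
      (∀ h, P (Q.tgt h) * s.1 h = 0) ∧ (∀ j, P j * s.2.1 j = 0) := by
  -- get a nonzero functional vanishing on the range
  have hlt : LinearMap.range (Q.bMap s i) < ⊤ :=
    lt_top_iff_ne_top.2 (fun h => hns (LinearMap.range_eq_top.mp h))
  obtain ⟨φ, hφ0, hφmap⟩ :=
    Submodule.exists_dual_map_eq_bot_of_lt_top hlt inferInstance
  have hvanish : ∀ y, φ (Q.bMap s i y) = 0 := by
    intro y
    have hmem : φ (Q.bMap s i y) ∈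
        (LinearMap.range (Q.bMap s i)).map φ :=
      Submodule.mem_map_of_mem (LinearMap.mem_range_self _ y)
    rw [hφmap] at hmem
    simpa using hmem
  set w : Fin (v i) → ℂ := fun j => φ (Pi.single j 1) with hwdef
  have hφdot : ∀ y, φ y = w ⬝ᵥ y := by
    intro y
    conv_lhs => rw [← Finset.univ_sum_single y]
    rw [map_sum, dotProduct]
    refine Finset.sum_congr rfl fun j _ => ?_
    have h5 : Pi.single j (y j) = y j • (Pi.single j (1 : ℂ) : Fin (v i) → ℂ) := by
      rw [← Pi.single_smul, smul_eq_mul, mul_one]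
    rw [h5, _root_.map_smul, smul_eq_mul, hwdef, mul_comm]
  have hw0 : w ≠ 0 := by
    intro hw
    apply hφ0
    apply LinearMap.ext
    intro y
    rw [hφdot, hw]
    simp
  -- γ condition
  have hγ0 : w ᵥ* s.2.1 i = 0 := by
    have h1 : ∀ p, Q.bMap s i (p, 0) = s.2.1 i *ᵥ p := by
      intro p
      simp [bMap]
    funext j
    have h2 := hvanish ((Pi.single j 1 : Fin (d i) → ℂ), 0)
    rw [h1, hφdot, Matrix.dotProduct_mulVec, dotProduct_single, mul_one] at h2
    simpa using h2
  -- B condition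
  have hB0 : ∀ h (ht : Q.tgt h = i),
      (fun a => w (finCongr (congrArg v ht) a)) ᵥ* s.1 h = 0 := by
    intro h ht
    have hepsne : Q.eps h ≠ 0 := by
      rcases Q.eps_pm h with he | he <;> rw [he] <;> norm_num
    have h1 : ∀ yy : Fin (v (Q.src h)) → ℂ,
        Q.bMap s i (0, Pi.single (⟨h, ht⟩ : {h : Hh // Q.tgt h = i}) yy)
          = Q.eps h • (vcast (congrArg v ht)) (s.1 h *ᵥ yy) := by
      intro yy
      rw [bMap, LinearMap.add_apply, LinearMap.sum_apply]
      rw [Finset.sum_eq_single (⟨h, ht⟩ : {h : Hh // Q.tgt h = i})]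
      · simp [LinearMap.proj]
      · intro h' _ hne
        simp [LinearMap.proj, Pi.single_eq_of_ne hne]
      · intro hi; exact absurd (Finset.mem_univ _) hi
    have h2 : ∀ yy : Fin (v (Q.src h)) → ℂ,
        w ⬝ᵥ ((vcast (congrArg v ht)) (s.1 h *ᵥ yy)) = 0 := by
      intro yy
      have h3 := hvanish (0, Pi.single (⟨h, ht⟩ : {h : Hh // Q.tgt h = i}) yy)
      rw [h1, _root_.map_smul, smul_eq_mul, mul_eq_zero] at h3
      rcases h3 with h3 | h3
      · exact absurd h3 hepsne
      · rw [hφdot] at h3; exact h3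
    have h4 : ∀ z : Fin (v (Q.tgt h)) → ℂ,
        w ⬝ᵥ ((vcast (congrArg v ht)) z)
          = (fun a => w (finCongr (congrArg v ht) a)) ⬝ᵥ z := by
      intro z
      rw [dotProduct, dotProduct]
      exact (Fintype.sum_equiv (finCongr (congrArg v ht))
        (fun a => w (finCongr (congrArg v ht) a) * z a)
        (fun b => w b * (vcast (congrArg v ht) z) b)
        (fun a => rfl)).symm
    funext b
    have h5 := h2 (Pi.single b 1)
    rw [h4, Matrix.dotProduct_mulVec, dotProduct_single, mul_one] at h5
    simpa using h5
  -- build the projections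
  obtain ⟨j₀, hj₀⟩ := Function.ne_iff.mp hw0
  have hj₀' : w j₀ ≠ 0 := by simpa using hj₀
  set x : Fin (v i) → ℂ := (w j₀)⁻¹ • (Pi.single j₀ 1 : Fin (v i) → ℂ) with hxdef
  have hwx : w ⬝ᵥ x = 1 := by
    rw [hxdef, dotProduct_smul, dotProduct_single, mul_one, smul_eq_mul,
      inv_mul_cancel₀ hj₀']
  set wt : (j : I) → Fin (v j) → ℂ :=
    fun j => if hj : j = i then (fun a => w (finCongr (congrArg v hj) a)) else 0 with hwt
  set xt : (j : I) → Fin (v j) → ℂ :=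
    fun j => if hj : j = i then (fun a => x (finCongr (congrArg v hj) a)) else 0 with hxt
  have hwti : wt i = w := by
    show (if hj : i = i then (fun a => w (finCongr (congrArg v hj) a)) else 0) = w
    rw [dif_pos rfl]
    exact funext fun a => congrArg w (Fin.ext rfl)
  have hxti : xt i = x := by
    show (if hj : i = i then (fun a => x (finCongr (congrArg v hj) a)) else 0) = x
    rw [dif_pos rfl]
    exact funext fun a => congrArg x (Fin.ext rfl)
  have hwtj : ∀ j, j ≠ i → wt j = 0 := by
    intro j hj
    show (if hj : j = i then (fun a => w (finCongr (congrArg v hj) a)) else 0) = 0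
    rw [dif_neg hj]
  have hwtB : ∀ h, wt (Q.tgt h) ᵥ* s.1 h = 0 := by
    intro h
    by_cases ht : Q.tgt h = i
    · have : wt (Q.tgt h) = fun a => w (finCongr (congrArg v ht) a) := by
        show (if hj : Q.tgt h = i then (fun a => w (finCongr (congrArg v hj) a)) else 0) = _
        rw [dif_pos ht]
      rw [this]
      exact hB0 h ht
    · rw [hwtj _ ht, Matrix.zero_vecMul]
  have hwtγ : ∀ j, wt j ᵥ* s.2.1 j = 0 := by
    intro j
    by_cases hj : j = i
    · subst hj
      rw [hwti]
      exact hγ0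
    · rw [hwtj _ hj, Matrix.zero_vecMul]
  have hκ : ∀ j, wt j ⬝ᵥ xt j = if j = i then 1 else 0 := by
    intro j
    by_cases hj : j = i
    · subst hj
      rw [hwti, hxti, if_pos rfl, hwx]
    · rw [hwtj _ hj, if_neg hj, zero_dotProduct]
  have c1 : ∀ j, Matrix.vecMulVec (xt j) (wt j) * Matrix.vecMulVec (xt j) (wt j)
      = Matrix.vecMulVec (xt j) (wt j) := by
    intro j
    rw [vmv_vmv]
    by_cases hj : j = i
    · subst hj
      rw [hwti, hxti, hwx, one_smul]
    · rw [hκ, if_neg hj, zero_smul, hwtj _ hj, vmv_zero_right]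
  have c2 : ∀ j (c : ℂ), (1 + c • Matrix.vecMulVec (xt j) (wt j)).det
      = if j = i then 1 + c else 1 := by
    intro j c
    rw [det_one_add_smul_vmv, hκ]
    by_cases hj : j = i
    · rw [if_pos hj, if_pos hj, mul_one]
    · rw [if_neg hj, if_neg hj, mul_zero, add_zero]
  have c3 : ∀ h, Matrix.vecMulVec (xt (Q.tgt h)) (wt (Q.tgt h)) * s.1 h = 0 := by
    intro h
    rw [vmv_mul, hwtB, vmv_zero_right]
  have c4 : ∀ j, Matrix.vecMulVec (xt j) (wt j) * s.2.1 j = 0 := by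
    intro j
    rw [vmv_mul, hwtγ, vmv_zero_right]
  exact ⟨fun j => Matrix.vecMulVec (xt j) (wt j), c1, c2, c3, c4⟩
theorem exists_P_left [Fintype I] [DecidableEq I] [Fintype Hh] [DecidableEq Hh]
    (Q : QuiverShape I Hh) {d v : I → ℕ} (s : Q.Rep d v) (i : I)
    (hni : ¬ Function.Injective ⇑(Q.aMap s i)) :
    ∃ P : (j : I) → Matrix (Fin (v j)) (Fin (v j)) ℂ,
      (∀ j, P j * P j = P j) ∧
      (∀ j (c : ℂ), (1 + c • P j).det = if j = i then 1 + c else 1) ∧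
      (∀ h, s.1 h * P (Q.src h) = 0) ∧ (∀ j, s.2.2 j * P j = 0) := by
  have hker : LinearMap.ker (Q.aMap s i) ≠ ⊥ := by
    intro hk
    exact hni (LinearMap.ker_eq_bot.mp hk)
  obtain ⟨x, hxmem, hx0⟩ := (Submodule.ne_bot_iff _).mp hker
  have hax : Q.aMap s i x = 0 := hxmem
  have hδx : s.2.2 i *ᵥ x = 0 := congrArg Prod.fst hax
  have hBx : ∀ h' : {h : Hh // Q.tgt h = i},
      Q.Bbar s h'.1 *ᵥ ((vcast (congrArg v h'.2)).symm x) = 0 := by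
    intro h'
    exact congrFun (congrArg Prod.snd hax) h'
  have hC : ∀ h (hs' : Q.src h = i),
      s.1 h *ᵥ (fun a => x (finCongr (congrArg v hs') a)) = 0 := by
    have key : ∀ (h₂ : Hh) (ht2 : Q.tgt h₂ = i) (h : Hh) (hr : Q.rev h₂ = h)
        (hs' : Q.src h = i),
        s.1 h *ᵥ (fun a => x (finCongr (congrArg v hs') a)) = 0 := by
      intro h₂ ht2 h hr hs'
      subst hr
      have hyp := hBx ⟨h₂, ht2⟩
      rw [Bbar, Matrix.reindex_apply, Matrix.submatrix_mulVec_equiv] at hyp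
      funext r
      exact congrFun hyp ((finCongr (congrArg v (Q.tgt_rev h₂))) r)
    intro h hs'
    exact key (Q.rev h) (by rw [Q.tgt_rev]; exact hs') h (Q.rev_rev h) hs'
  -- choose the dual vector
  obtain ⟨j₀, hj₀⟩ := Function.ne_iff.mp hx0
  have hj₀' : x j₀ ≠ 0 := by simpa using hj₀
  set ψ : Fin (v i) → ℂ := (x j₀)⁻¹ • (Pi.single j₀ 1 : Fin (v i) → ℂ) with hψdef
  have hψx : ψ ⬝ᵥ x = 1 := by
    rw [hψdef, smul_dotProduct, single_dotProduct, one_mul, smul_eq_mul,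
      inv_mul_cancel₀ hj₀']
  set xt : (j : I) → Fin (v j) → ℂ :=
    fun j => if hj : j = i then (fun a => x (finCongr (congrArg v hj) a)) else 0 with hxt
  set pt : (j : I) → Fin (v j) → ℂ :=
    fun j => if hj : j = i then (fun a => ψ (finCongr (congrArg v hj) a)) else 0 with hpt
  have hxti : xt i = x := by
    show (if hj : i = i then (fun a => x (finCongr (congrArg v hj) a)) else 0) = x
    rw [dif_pos rfl]
    exact funext fun a => congrArg x (Fin.ext rfl)
  have hpti : pt i = ψ := by
    show (if hj : i = i then (fun a => ψ (finCongr (congrArg v hj) a)) else 0) = ψ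
    rw [dif_pos rfl]
    exact funext fun a => congrArg ψ (Fin.ext rfl)
  have hxtj : ∀ j, j ≠ i → xt j = 0 := by
    intro j hj
    show (if hj : j = i then (fun a => x (finCongr (congrArg v hj) a)) else 0) = 0
    rw [dif_neg hj]
  have hptj : ∀ j, j ≠ i → pt j = 0 := by
    intro j hj
    show (if hj : j = i then (fun a => ψ (finCongr (congrArg v hj) a)) else 0) = 0
    rw [dif_neg hj]
  have hxtB : ∀ h, s.1 h *ᵥ xt (Q.src h) = 0 := by
    intro h
    by_cases hsr : Q.src h = i
    · have hxts : xt (Q.src h) = fun a => x (finCongr (congrArg v hsr) a) := by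
        show (if hj : Q.src h = i then (fun a => x (finCongr (congrArg v hj) a)) else 0) = _
        rw [dif_pos hsr]
      rw [hxts]
      exact hC h hsr
    · rw [hxtj _ hsr, Matrix.mulVec_zero]
  have hxtδ : ∀ j, s.2.2 j *ᵥ xt j = 0 := by
    intro j
    by_cases hj : j = i
    · subst hj
      rw [hxti]
      exact hδx
    · rw [hxtj _ hj, Matrix.mulVec_zero]
  have hκ : ∀ j, pt j ⬝ᵥ xt j = if j = i then 1 else 0 := by
    intro j
    by_cases hj : j = i
    · subst hj
      rw [hpti, hxti, if_pos rfl, hψx]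
    · rw [hptj _ hj, if_neg hj, zero_dotProduct]
  have c1 : ∀ j, Matrix.vecMulVec (xt j) (pt j) * Matrix.vecMulVec (xt j) (pt j)
      = Matrix.vecMulVec (xt j) (pt j) := by
    intro j
    rw [vmv_vmv]
    by_cases hj : j = i
    · subst hj
      rw [hpti, hxti, hψx, one_smul]
    · rw [hκ, if_neg hj, zero_smul, hxtj _ hj, vmv_zero_left]
  have c2 : ∀ j (c : ℂ), (1 + c • Matrix.vecMulVec (xt j) (pt j)).det
      = if j = i then 1 + c else 1 := by
    intro j c
    rw [det_one_add_smul_vmv, hκ]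
    by_cases hj : j = i
    · rw [if_pos hj, if_pos hj, mul_one]
    · rw [if_neg hj, if_neg hj, mul_zero, add_zero]
  have c3 : ∀ h, s.1 h * Matrix.vecMulVec (xt (Q.src h)) (pt (Q.src h)) = 0 := by
    intro h
    rw [mul_vmv, hxtB, vmv_zero_left]
  have c4 : ∀ j, s.2.2 j * Matrix.vecMulVec (xt j) (pt j) = 0 := by
    intro j
    rw [mul_vmv, hxtδ, vmv_zero_left]
  exact ⟨fun j => Matrix.vecMulVec (xt j) (pt j), c1, c2, c3, c4⟩
private lemma sum_mulVec' {α : Type} {a b : ℕ} (F : Finset α)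
    (f : α → Matrix (Fin a) (Fin b) ℂ) (x : Fin b → ℂ) :
    (∑ i ∈ F, f i) *ᵥ x = ∑ i ∈ F, f i *ᵥ x := by
  funext j
  simp only [Matrix.mulVec, dotProduct, Finset.sum_apply, Matrix.sum_apply,
    Finset.sum_mul]
  exact Finset.sum_comm

private lemma vcast_conj {a b : ℕ} (e : a = b) (M : Matrix (Fin a) (Fin a) ℂ)
    (x : Fin b → ℂ) :
    (Matrix.reindex (finCongr e) (finCongr e) M) *ᵥ x
      = (vcast e) (M *ᵥ ((vcast e).symm x)) := by
  rw [Matrix.reindex_apply, Matrix.submatrix_mulVec_equiv]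
  rfl

theorem bMap_aMap [Fintype Hh] [DecidableEq I] (Q : QuiverShape I Hh) {d v : I → ℕ}
    (s : Q.Rep d v) (i : I) (x : Fin (v i) → ℂ) :
    Q.bMap s i (Q.aMap s i x) = Q.mu s i *ᵥ x := by
  simp only [bMap, aMap, mu, LinearMap.add_apply, LinearMap.sum_apply, LinearMap.coe_comp,
    Function.comp_apply, LinearMap.fst_apply, LinearMap.snd_apply, LinearMap.prod_apply, Pi.prod, Function.prod,
    Matrix.mulVecLin_apply, LinearMap.smul_apply, LinearMap.pi_apply, LinearMap.proj_apply,
    LinearEquiv.coe_coe, Matrix.add_mulVec, sum_mulVec', Matrix.smul_mulVec]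
  rw [add_comm]
  congr 1
  · refine Finset.sum_congr rfl fun h _ => ?_
    congr 1
    rw [vcast_conj, ← Matrix.mulVec_mulVec]
  · rw [Matrix.mulVec_mulVec]

end QuiverShape

end Aux


/-- Lemma on mono/epi at semistable points. -/
theorem surjective_bMap_injective_aMap_of_semistable
    {I Hh : Type} [Fintype I] [DecidableEq I] [Fintype Hh] [DecidableEq Hh]
    (Q : QuiverShape I Hh) (d v : I → ℕ) (lam : I → ℂ) (m : I → ℤ)
    (s : Q.Rep d v) (hs : s ∈ Q.lamSet lam d v) (hss : Q.Semistable m s) (i : I) :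
    (lam i ≠ 0 → Function.Surjective ⇑(Q.bMap s i) ∧ Function.Injective ⇑(Q.aMap s i)) ∧
    (0 < m i → Function.Surjective ⇑(Q.bMap s i)) ∧
    (m i < 0 → Function.Injective ⇑(Q.aMap s i)) := by
  have hba : ∀ x, Q.bMap s i (Q.aMap s i x) = lam i • x := by
    intro x
    rw [QuiverShape.bMap_aMap, hs i, Matrix.smul_mulVec, Matrix.one_mulVec]
  refine ⟨fun hl => ⟨?_, ?_⟩, fun hm => ?_, fun hm => ?_⟩
  · intro y
    refine ⟨Q.aMap s i ((lam i)⁻¹ • y), ?_⟩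
    rw [map_smul, map_smul, hba, smul_smul, inv_mul_cancel₀ hl, one_smul]
  · intro x y hxy
    have h2 : lam i • x = lam i • y := by
      rw [← hba, ← hba, hxy]
    exact smul_right_injective _ hl h2
  · by_contra hns
    obtain ⟨P, c1, c2, c3, c4⟩ := QuiverShape.exists_P_right Q s i hns
    exact QuiverShape.key_case_right Q m s hss i hm P c1 c2 c3 c4
  · by_contra hni
    obtain ⟨P, c1, c2, c3, c4⟩ := QuiverShape.exists_P_left Q s i hni
    exact QuiverShape.key_case_left Q m s hss i hm P c1 c2 c3 c4
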